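/- Let A and B be nonempty finite types, and let U : Matrix ((A × B) × B) ((A × B) × B) ℂ be the permutation matrix swapping the last two factors: U ((a,b),c) ((a',b'),c') = 1 if a = a' ∧ b = c' ∧ c = b', and 0 otherwise. Let ρ be a density matrix on A × B, and write ρ_A := Tr₂ ρ (the partial trace over B) and ρ_B := Tr₁ ρ (the partial trace over A). Then: (i) for every density matrix τ on B, the partial trace over the first factor A × B of U * (ρ ⊗ₖ τ) * Uᴴ equals ρ_B, so τ* := ρ_B is the unique density-matrix solution of Deutsch's fixed-point equation for the swap interaction; (ii) the partial trace over the last factor B of U * (ρ ⊗ₖ τ*) * Uᴴ equals ρ_A ⊗ₖ ρ_B; (iii) in particular, for A = B = Fin 2 and ρ the Bell density matrix given by ρ (i,j) (k,l) = 1/2 if i = j ∧ k = l and 0 otherwise, the output ρ_A ⊗ₖ ρ_B = (4 : ℂ)⁻¹ • 1 is not equal to ρ. Hence sending a system through a D-CTC via a swap acts as the identity on every single-system state but maps every bipartite state to the product of its marginals, breaking all entanglement; in particular the D-CTC model violates the yanking axiom of traced monoidal categories and is not locally process tomographic. -/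
import Mathlib


open Matrix
open scoped ComplexOrder Kronecker

/-- Partial trace over the first factor: `Tr₁(M) i j = ∑ k, M (k, i) (k, j)`. -/
noncomputable def ptrFst {a b : Type*} [Fintype a] (M : Matrix (a × b) (a × b) ℂ) :
    Matrix b b ℂ :=
  Matrix.of fun i j => ∑ k : a, M (k, i) (k, j)

/-- Partial trace over the second factor: `Tr₂(M) i j = ∑ k, M (i, k) (j, k)`. -/
noncomputable def ptrSnd {a b : Type*} [Fintype b] (M : Matrix (a × b) (a × b) ℂ) :
    Matrix a a ℂ :=
  Matrix.of fun i j => ∑ k : b, M (i, k) (j, k)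

/-- The permutation matrix on `(A × B) × B` swapping the last two factors. -/
noncomputable def swapU (A B : Type*) [DecidableEq A] [DecidableEq B] :
    Matrix ((A × B) × B) ((A × B) × B) ℂ :=
  Matrix.of fun p q =>
    if p.1.1 = q.1.1 ∧ p.1.2 = q.2 ∧ p.2 = q.1.2 then 1 else 0

/-- The Bell density matrix on two qubits. -/
noncomputable def bell : Matrix (Fin 2 × Fin 2) (Fin 2 × Fin 2) ℂ :=
  Matrix.of fun p q => if p.1 = p.2 ∧ q.1 = q.2 then (1 / 2 : ℂ) else 0

lemma swapU_eq' (A B : Type*) [DecidableEq A] [DecidableEq B] (p q : (A × B) × B) :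
    swapU A B p q = if q = ((p.1.1, p.2), p.1.2) then 1 else 0 := by
  simp only [swapU, Matrix.of_apply, Prod.ext_iff]
  refine if_congr ?_ rfl rfl
  constructor
  · rintro ⟨h1, h2, h3⟩; exact ⟨⟨h1.symm, h3.symm⟩, h2.symm⟩
  · rintro ⟨⟨h1, h2⟩, h3⟩; exact ⟨h1.symm, h3.symm, h2.symm⟩

lemma swap_conj_entry {A B : Type*} [Fintype A] [Fintype B] [DecidableEq A] [DecidableEq B]
    (M : Matrix ((A × B) × B) ((A × B) × B) ℂ) (p q : (A × B) × B) :
    (swapU A B * M * (swapU A B)ᴴ) p q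
      = M ((p.1.1, p.2), p.1.2) ((q.1.1, q.2), q.1.2) := by
  simp [Matrix.mul_apply, conjTranspose_apply, swapU_eq', apply_ite,
    Finset.sum_ite_eq, Finset.sum_ite_eq']

lemma ptrFst_conj {A B : Type*} [Fintype A] [Fintype B] [DecidableEq A] [DecidableEq B]
    (ρ : Matrix (A × B) (A × B) ℂ) (τ : Matrix B B ℂ) (hτ : τ.trace = 1) :
    ptrFst (swapU A B * (ρ ⊗ₖ τ) * (swapU A B)ᴴ) = ptrFst ρ := by
  ext i j
  simp only [ptrFst, Matrix.of_apply, swap_conj_entry, kroneckerMap_apply]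
  rw [Fintype.sum_prod_type]
  simp only [← Finset.mul_sum]
  have : ∑ c : B, τ c c = 1 := hτ
  simp [this]

/-- Sending a system through a D-CTC via a swap acts as the identity on
single-system states but maps every bipartite state to the product of its
marginals, breaking all entanglement: (i) for any CTC state `τ`, the state
emerging from the CTC is the marginal `ρ_B`, which is thus the unique solution of
Deutsch's fixed-point equation; (ii) the output of the interaction is `ρ_A ⊗ ρ_B`;
(iii) for the Bell state the output `(1/4)𝟙` differs from the input. -/
theorem dctc_swap_breaks_entanglement :
    (∀ (A B : Type) [Fintype A] [Fintype B] [Nonempty A] [Nonempty B]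
        [DecidableEq A] [DecidableEq B]
        (ρ : Matrix (A × B) (A × B) ℂ), ρ.PosSemidef → ρ.trace = 1 →
        ∀ τ : Matrix B B ℂ, τ.PosSemidef → τ.trace = 1 →
          ptrFst (swapU A B * (ρ ⊗ₖ τ) * (swapU A B)ᴴ) = ptrFst ρ ∧
          (ptrFst (swapU A B * (ρ ⊗ₖ τ) * (swapU A B)ᴴ) = τ ↔ τ = ptrFst ρ)) ∧
    (∀ (A B : Type) [Fintype A] [Fintype B] [Nonempty A] [Nonempty B]
        [DecidableEq A] [DecidableEq B]
        (ρ : Matrix (A × B) (A × B) ℂ), ρ.PosSemidef → ρ.trace = 1 →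
          ptrSnd (swapU A B * (ρ ⊗ₖ ptrFst ρ) * (swapU A B)ᴴ) =
            ptrSnd ρ ⊗ₖ ptrFst ρ) ∧
    (ptrSnd bell ⊗ₖ ptrFst bell
        = (4 : ℂ)⁻¹ • (1 : Matrix (Fin 2 × Fin 2) (Fin 2 × Fin 2) ℂ) ∧
      (4 : ℂ)⁻¹ • (1 : Matrix (Fin 2 × Fin 2) (Fin 2 × Fin 2) ℂ) ≠ bell) := by
  refine ⟨?_, ?_, ?_, ?_⟩
  · intro A B _ _ _ _ _ _ ρ _ _ τ _ hτtr
    have h := ptrFst_conj ρ τ hτtr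
    exact ⟨h, by rw [h]; exact eq_comm⟩
  · intro A B _ _ _ _ _ _ ρ _ _
    ext p q
    simp only [ptrSnd, Matrix.of_apply, swap_conj_entry, kroneckerMap_apply, ptrFst,
      ← Finset.sum_mul]
  · ext ⟨i, j⟩ ⟨k, l⟩
    fin_cases i <;> fin_cases j <;> fin_cases k <;> fin_cases l <;>
      simp [ptrFst, ptrSnd, bell, Fin.sum_univ_two, Matrix.one_apply, Prod.ext_iff] <;>
      norm_num
  · intro h
    have := congrFun (congrFun h ((0 : Fin 2), (0 : Fin 2))) (1, 1)
    simp [bell, Matrix.one_apply, Prod.ext_iff] at this
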